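/- arXiv:2201.01021 — 3 statements merged into one kernel-verified Lean document; each statement's English description precedes it below -/
import Mathlib

section
/- Let P(x, y) = x₁y₁ + x₂y₂ + 2x₃y₁y₂ + x₃²y₁² for x ∈ ℝ³ and y ∈ ℝ². There does not exist a diffeomorphism κ : ℝ³ → ℝ³, κ = (κ₁, κ₂, κ₃), together with functions C₁, C₂ : ℝ² → ℝ depending only on y = (y₁, y₂), such that for all x̃ ∈ ℝ³ and all y ∈ ℝ²: (∂κ₁/∂x̃₁) + (2y₂ + 4κ₃(x̃)y₁)(∂κ₃/∂x̃₁) = 1, (∂κ₁/∂x̃₂) + (2y₂ + 4κ₃(x̃)y₁)(∂κ₃/∂x̃₂) = 0, (∂κ₁/∂x̃₃) + (2y₂ + 4κ₃(x̃)y₁)(∂κ₃/∂x̃₃) = C₁(y), and the analogous system ∂κ₂/∂x̃₁ + 2y₁ ∂κ₃/∂x̃₁ = 0, ∂κ₂/∂x̃₂ + 2y₁ ∂κ₃/∂x̃₂ = 1, ∂κ₂/∂x̃₃ + 2y₁ ∂κ₃/∂x̃₃ = C₂(y). -/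
lemma clm_zero_of_basis (L : (Fin 3 → ℝ) →L[ℝ] ℝ)
    (h0 : L (Pi.single 0 1) = 0) (h1 : L (Pi.single 1 1) = 0)
    (h2 : L (Pi.single 2 1) = 0) : L = 0 := by
  ext v
  have hv : v = v 0 • (Pi.single 0 1 : Fin 3 → ℝ) + v 1 • (Pi.single 1 1 : Fin 3 → ℝ)
      + v 2 • (Pi.single 2 1 : Fin 3 → ℝ) := by
    funext j; fin_cases j <;> simp [Pi.single_apply]
  rw [hv]
  simp [h0, h1, h2]

/-- Bourgain's counterexample phase
`P(x,y) = x₁y₁ + x₂y₂ + 2x₃y₁y₂ + x₃²y₁²` admits no diffeomorphism `κ` of `ℝ³`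
straightening the Gauss map. -/
theorem stmt_1 :
    ¬ ∃ (κ : (Fin 3 → ℝ) → (Fin 3 → ℝ)) (κinv : (Fin 3 → ℝ) → (Fin 3 → ℝ))
        (C₁ C₂ : (Fin 2 → ℝ) → ℝ),
      ContDiff ℝ (⊤ : ℕ∞) κ ∧ ContDiff ℝ (⊤ : ℕ∞) κinv ∧
      Function.LeftInverse κinv κ ∧ Function.RightInverse κinv κ ∧
      (∀ (x : Fin 3 → ℝ) (y : Fin 2 → ℝ),
        (fderiv ℝ (fun z => κ z 0) x) (Pi.single 0 1)
            + (2 * y 1 + 4 * κ x 2 * y 0) * (fderiv ℝ (fun z => κ z 2) x) (Pi.single 0 1) = 1 ∧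
        (fderiv ℝ (fun z => κ z 0) x) (Pi.single 1 1)
            + (2 * y 1 + 4 * κ x 2 * y 0) * (fderiv ℝ (fun z => κ z 2) x) (Pi.single 1 1) = 0 ∧
        (fderiv ℝ (fun z => κ z 0) x) (Pi.single 2 1)
            + (2 * y 1 + 4 * κ x 2 * y 0) * (fderiv ℝ (fun z => κ z 2) x) (Pi.single 2 1) = C₁ y ∧
        (fderiv ℝ (fun z => κ z 1) x) (Pi.single 0 1)
            + 2 * y 0 * (fderiv ℝ (fun z => κ z 2) x) (Pi.single 0 1) = 0 ∧
        (fderiv ℝ (fun z => κ z 1) x) (Pi.single 1 1)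
            + 2 * y 0 * (fderiv ℝ (fun z => κ z 2) x) (Pi.single 1 1) = 1 ∧
        (fderiv ℝ (fun z => κ z 1) x) (Pi.single 2 1)
            + 2 * y 0 * (fderiv ℝ (fun z => κ z 2) x) (Pi.single 2 1) = C₂ y) := by
  rintro ⟨κ, κinv, C₁, C₂, hκ, hκinv, hleft, hright, H⟩
  set c : ℝ := (C₁ ![0, 1] - C₁ ![0, 0]) / 2 with hc_def
  -- partial derivatives of κ₃ in the first two directions vanish
  have h31 : ∀ x, fderiv ℝ (fun z => κ z 2) x (Pi.single 0 1) = 0 := by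
    intro x
    have e0 := (H x ![0, 0]).2.2.2.1
    have e1 := (H x ![1, 0]).2.2.2.1
    simp [Matrix.cons_val_zero, Matrix.cons_val_one, Matrix.head_cons] at e0 e1
    linarith
  have h32 : ∀ x, fderiv ℝ (fun z => κ z 2) x (Pi.single 1 1) = 0 := by
    intro x
    have e0 := (H x ![0, 0]).2.2.2.2.1
    have e1 := (H x ![1, 0]).2.2.2.2.1
    simp [Matrix.cons_val_zero, Matrix.cons_val_one, Matrix.head_cons] at e0 e1
    linarith
  -- the third partial is the constant c
  have h33 : ∀ x, fderiv ℝ (fun z => κ z 2) x (Pi.single 2 1) = c := by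
    intro x
    have e0 := (H x ![0, 0]).2.2.1
    have e1 := (H x ![0, 1]).2.2.1
    simp [Matrix.cons_val_zero, Matrix.cons_val_one, Matrix.head_cons] at e0 e1
    rw [hc_def]; linarith
  -- relation forcing κ₃ constant if c ≠ 0
  have hrel : ∀ x, 4 * κ x 2 * c = C₁ ![1, 0] - C₁ ![0, 0] := by
    intro x
    have e0 := (H x ![0, 0]).2.2.1
    have e1 := (H x ![1, 0]).2.2.1
    rw [h33 x] at e1
    simp [Matrix.cons_val_zero, Matrix.cons_val_one, Matrix.head_cons] at e0 e1
    linarith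
  have hdiff : Differentiable ℝ fun z => κ z 2 :=
    differentiable_pi.mp (hκ.differentiable (by norm_num)) 2
  -- in all cases, κ₃ is constant
  have hconst : ∀ a b, κ a 2 = κ b 2 := by
    by_cases hc : c = 0
    · have hz : ∀ x, fderiv ℝ (fun z => κ z 2) x = 0 := fun x =>
        clm_zero_of_basis _ (h31 x) (h32 x) (by rw [h33 x, hc])
      exact fun a b => is_const_of_fderiv_eq_zero hdiff hz a b
    · intro a b
      have ha := hrel a
      have hb := hrel b
      have : 4 * κ a 2 * c = 4 * κ b 2 * c := by rw [ha, hb]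
      field_simp at this
      linarith
  -- κ is surjective, so κ₃ cannot be constant
  have h0 := hright (fun _ => 0)
  have h1 := hright (fun _ => 1)
  have := hconst (κinv fun _ => 0) (κinv fun _ => 1)
  rw [h0, h1] at this
  norm_num at this
end

section
/- Suppose G : ℝⁿ → ℂ is an L² function whose Fourier transform Ĝ is supported in a ball B(ξ₀, r) of radius r > 0. Then for any ball B(x₀, ρ) with ρ ≤ r^{-1}, one has ∫_{B(x₀,ρ)} |G(x)|² dx ≤ C(n) (ρ r)ⁿ ∫_{ℝⁿ} |G|² dx, where C(n) depends only on n. -/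
open MeasureTheory
open scoped FourierTransform

set_option linter.unusedSectionVars false

open MeasureTheory Metric Complex
open scoped FourierTransform RealInnerProductSpace ContDiff SchwartzMap

noncomputable section

namespace Stmt2Aux

variable {V : Type*} [NormedAddCommGroup V] [InnerProductSpace ℝ V]
  [MeasurableSpace V] [BorelSpace V] [FiniteDimensional ℝ V]

/-- The multiplication formula for the Fourier transform. -/
lemma mult_formula {f g : V → ℂ} (hf : Integrable f) (hg : Integrable g) :
    ∫ ξ, 𝓕 f ξ * g ξ = ∫ x, f x * 𝓕 g x := by
  have hL : Continuous fun p : V × V ↦ (innerₗ V) p.1 p.2 := continuous_inner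
  have hflip : (innerₗ V).flip = innerₗ V := by
    apply LinearMap.ext; intro x; apply LinearMap.ext; intro y
    simp only [LinearMap.flip_apply]
    exact real_inner_comm x y
  have := VectorFourier.integral_fourierIntegral_smul_eq_flip (L := innerₗ V)
    Real.continuous_fourierChar hL hf hg
  simpa [hflip, smul_eq_mul] using! this

/-- A smooth compactly supported function is Schwartz. -/
lemma exists_schwartz {g : V → ℂ} (hg : ContDiff ℝ ∞ g) (h2 : HasCompactSupport g) :
    ∃ u : 𝓢(V, ℂ), ⇑u = g := by
  refine ⟨⟨g, hg, fun k m => ?_⟩, rfl⟩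
  obtain ⟨C, hC⟩ := Continuous.bounded_above_of_compact_support
    (f := fun x => ‖x‖ ^ k * ‖iteratedFDeriv ℝ m g x‖)
    (((continuous_norm).pow k).mul
      ((hg.continuous_iteratedFDeriv (by exact_mod_cast le_top)).norm))
    (((h2.iteratedFDeriv m).norm).mul_left)
  exact ⟨C, fun x => (Real.le_norm_self _).trans (hC x)⟩
-- appended part, test separately by concatenation
lemma ae_fourier_inversion {G : V → ℂ} (hG : Integrable G) (hFG : Integrable (𝓕 G)) :
    G =ᵐ[volume] 𝓕⁻ (𝓕 G) := by
  have hLneg : Continuous fun p : V × V ↦ (-innerₗ V) p.1 p.2 := by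
    exact continuous_inner.neg
  have hcont : Continuous (𝓕⁻ (𝓕 G)) :=
    VectorFourier.fourierIntegral_continuous Real.continuous_fourierChar hLneg hFG
  apply ae_eq_of_integral_contDiff_smul_eq hG.locallyIntegrable hcont.locallyIntegrable
  intro g gsmooth gsupp
  obtain ⟨u, hu⟩ := exists_schwartz (g := fun x => (g x : ℂ))
    (Complex.ofRealCLM.contDiff.comp gsmooth)
    (gsupp.comp_left (g := fun t : ℝ => (t : ℂ)) (by simp))
  have hsmul : ∀ F : V → ℂ, (fun x => g x • F x) = fun x => F x * u x := fun F =>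
    funext fun x => by simp [hu, Complex.real_smul, mul_comm]
  rw [hsmul, hsmul]
  have hu_int : Integrable (⇑u) := u.integrable (μ := volume)
  have hFu_int : Integrable (𝓕 ⇑u) := by
    simpa [SchwartzMap.fourier_coe] using (SchwartzMap.fourierTransformCLM ℂ u).integrable (μ := volume)
  have hFinvu_int : Integrable (𝓕⁻ ⇑u) := by
    have := (𝓕⁻ u).integrable (μ := volume)
    rwa [SchwartzMap.fourierInv_coe] at this
  have hinv : 𝓕 (𝓕⁻ ⇑u) = ⇑u :=
    Continuous.fourier_fourierInv_eq u.continuous hu_int hFu_int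
  have hhneg_int : Integrable (fun ξ => 𝓕 G (-ξ)) := hFG.comp_neg
  have step1 : ∫ x, 𝓕⁻ (𝓕 G) x * u x = ∫ ξ, 𝓕 G (-ξ) * 𝓕 ⇑u ξ := by
    rw [Real.fourierInv_eq_fourier_comp_neg (𝓕 G)]
    exact mult_formula hhneg_int hu_int
  have step2 : ∫ ξ, 𝓕 G (-ξ) * 𝓕 ⇑u ξ = ∫ ξ, 𝓕 G ξ * 𝓕⁻ ⇑u ξ := by
    have := MeasureTheory.integral_neg_eq_self (fun ξ => 𝓕 G ξ * 𝓕⁻ (⇑u) ξ) volume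
    rw [← this]
    congr 1; funext ξ
    rw [Real.fourierInv_eq_fourier_neg, neg_neg]
  have step3 : ∫ ξ, 𝓕 G ξ * 𝓕⁻ ⇑u ξ = ∫ x, G x * 𝓕 (𝓕⁻ ⇑u) x :=
    mult_formula hG hFinvu_int
  rw [step1, step2, step3, hinv]

lemma plancherel_aux {G : V → ℂ} (hG : Integrable G) (hFG : Integrable (𝓕 G)) :
    ∫ ξ, ‖𝓕 G ξ‖^2 = ∫ x, ‖G x‖^2 := by
  have hae := ae_fourier_inversion hG hFG
  have hconj_int : Integrable (fun ξ => (starRingEnd ℂ) (𝓕 G ξ)) := by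
    simpa using (Complex.conjCLE.toContinuousLinearMap :
      ℂ →L[ℝ] ℂ).integrable_comp hFG
  have key : ∀ x, 𝓕 (fun ξ => (starRingEnd ℂ) (𝓕 G ξ)) x = (starRingEnd ℂ) (𝓕⁻ (𝓕 G) x) := by
    intro x
    rw [Real.fourier_eq', Real.fourierInv_eq', ← integral_conj]
    congr 1; funext ξ
    rw [smul_eq_mul, smul_eq_mul, map_mul]
    congr 1
    rw [← Complex.exp_conj]
    congr 1
    simp only [map_mul, Complex.conj_ofReal, Complex.conj_I]
    push_cast
    ring
  have h1 : ∫ ξ, 𝓕 G ξ * (starRingEnd ℂ) (𝓕 G ξ) = ∫ x, G x * (starRingEnd ℂ) (G x) := by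
    rw [mult_formula hG hconj_int]
    have e1 : ∫ x, G x * 𝓕 (fun ξ => (starRingEnd ℂ) (𝓕 G ξ)) x
        = ∫ x, G x * (starRingEnd ℂ) (𝓕⁻ (𝓕 G) x) := by
      congr 1; funext x; rw [key]
    rw [e1]
    apply integral_congr_ae
    filter_upwards [hae] with x hx
    rw [← hx]
  have h2 : ∀ z : ℂ, z * (starRingEnd ℂ) z = ((‖z‖^2 : ℝ) : ℂ) := fun z => by
    rw [Complex.mul_conj]
    norm_cast
    rw [← Complex.sq_norm]
  simp only [h2] at h1
  have t1 : ∫ ξ, ((‖𝓕 G ξ‖^2 : ℝ) : ℂ) = ((∫ ξ, ‖𝓕 G ξ‖^2 : ℝ) : ℂ) :=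
    integral_ofReal
  have t2 : ∫ x, ((‖G x‖^2 : ℝ) : ℂ) = ((∫ x, ‖G x‖^2 : ℝ) : ℂ) :=
    integral_ofReal
  rw [t1, t2] at h1
  exact_mod_cast h1

end Stmt2Aux

end

open Metric Stmt2Aux

/-- local L² concentration (uncertainty principle): a function with
Fourier support in a ball of radius `r` has at most a `(ρr)ⁿ` fraction of its
L² mass on any ball of radius `ρ ≤ r⁻¹`. -/
theorem stmt_2 (n : ℕ) (hn : 1 ≤ n) :
    ∃ C > (0:ℝ), ∀ (G : EuclideanSpace ℝ (Fin n) → ℂ),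
      Integrable G → MemLp G 2 →
      ∀ (ξ₀ : EuclideanSpace ℝ (Fin n)) (r : ℝ), 0 < r →
      Function.support (𝓕 G) ⊆ Metric.ball ξ₀ r →
      ∀ (x₀ : EuclideanSpace ℝ (Fin n)) (ρ : ℝ), 0 < ρ → ρ ≤ r⁻¹ →
      ∫ x in Metric.ball x₀ ρ, ‖G x‖^2 ≤ C * (ρ * r)^n * ∫ x, ‖G x‖^2 := by
  classical
  set c : ℝ := (volume (ball (0 : EuclideanSpace ℝ (Fin n)) 1)).toReal with hcdef
  have hc0 : 0 < c :=
    ENNReal.toReal_pos (measure_ball_pos _ _ one_pos).ne' measure_ball_lt_top.ne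
  refine ⟨c ^ 2, by positivity, ?_⟩
  intro G hG _hG2 ξ₀ r hr hsupp x₀ ρ hρ hρr
  set h : EuclideanSpace ℝ (Fin n) → ℂ := 𝓕 G with hhdef
  have hcont : Continuous h :=
    VectorFourier.fourierIntegral_continuous Real.continuous_fourierChar continuous_inner hG
  have hhsupp : HasCompactSupport h := by
    apply HasCompactSupport.intro (isCompact_closedBall ξ₀ r)
    intro x hx
    by_contra hne
    exact hx (ball_subset_closedBall (hsupp hne))
  have hh_int : Integrable h := hcont.integrable_of_hasCompactSupport hhsupp
  have hae : G =ᵐ[volume] 𝓕⁻ h := ae_fourier_inversion hG hh_int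
  have hplan : ∫ ξ, ‖h ξ‖^2 = ∫ x, ‖G x‖^2 := plancherel_aux hG hh_int
  have hsq_int : Integrable (fun ξ => ‖h ξ‖^2) :=
    (by fun_prop : Continuous fun ξ => ‖h ξ‖^2).integrable_of_hasCompactSupport
      (hhsupp.comp_left (g := fun z : ℂ => ‖z‖^2) (by simp))
  set s := ball ξ₀ r with hsdef
  haveI : IsFiniteMeasure (volume.restrict s) :=
    ⟨by rw [Measure.restrict_apply_univ]; exact measure_ball_lt_top⟩
  have hGnn : (0:ℝ) ≤ ∫ x, ‖G x‖^2 := integral_nonneg (fun x => by positivity)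
  set M : ℝ := Real.sqrt ((volume s).toReal) * Real.sqrt (∫ x, ‖G x‖^2) with hMdef
  have hbound : ∀ x, ‖𝓕⁻ h x‖ ≤ M := by
    intro x
    have h1 : ‖𝓕⁻ h x‖ ≤ ∫ ξ, ‖h ξ‖ := by
      rw [Real.fourierInv_eq]
      apply (norm_integral_le_integral_norm _).trans_eq
      congr 1; funext ξ
      simp [norm_smul]
    have h2 : ∫ ξ, ‖h ξ‖ = ∫ ξ in s, ‖h ξ‖ := by
      symm
      apply setIntegral_eq_integral_of_forall_compl_eq_zero
      intro ξ hξ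
      have h0 : h ξ = 0 := by
        by_contra hne; exact hξ (hsupp hne)
      simp [h0]
    have hconj2 : Real.HolderConjugate 2 2 := by constructor <;> norm_num
    have hh2 : MemLp h 2 volume := hcont.memLp_of_hasCompactSupport hhsupp
    have hhn : MemLp (fun ξ => ‖h ξ‖) (ENNReal.ofReal 2) (volume.restrict s) := by
      have h22 : ENNReal.ofReal (2:ℝ) = (2 : ENNReal) := by
        norm_num
      rw [h22]
      exact (hh2.restrict s).norm
    have hone : MemLp (fun _ : EuclideanSpace ℝ (Fin n) => (1:ℝ)) (ENNReal.ofReal 2)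
        (volume.restrict s) := memLp_const 1
    have hH := integral_mul_le_Lp_mul_Lq_of_nonneg hconj2
      (Filter.Eventually.of_forall fun ξ => norm_nonneg (h ξ))
      (Filter.Eventually.of_forall fun _ => zero_le_one) hhn hone
    simp only [mul_one] at hH
    -- rewrite rpow by sqrt and compute the constants
    have hs2 : ∫ ξ in s, ‖h ξ‖ ^ (2:ℝ) = ∫ ξ in s, ‖h ξ‖^2 := by
      congr 1; funext ξ
      rw [← Real.rpow_natCast ‖h ξ‖ 2]; norm_num
    have hone2 : ∫ _ξ in s, (1:ℝ) ^ (2:ℝ) = (volume s).toReal := by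
      simp [Real.one_rpow, Measure.real]
    rw [hs2, hone2] at hH
    have hsnn : (0:ℝ) ≤ ∫ ξ in s, ‖h ξ‖^2 :=
      integral_nonneg (fun ξ => by positivity)
    have hrw1 : (∫ ξ in s, ‖h ξ‖^2) ^ ((1:ℝ)/2) = Real.sqrt (∫ ξ in s, ‖h ξ‖^2) := by
      rw [Real.sqrt_eq_rpow]
    have hrw2 : ((volume s).toReal) ^ ((1:ℝ)/2) = Real.sqrt ((volume s).toReal) := by
      rw [Real.sqrt_eq_rpow]
    rw [hrw1, hrw2] at hH
    have hle2 : ∫ ξ in s, ‖h ξ‖^2 ≤ ∫ x, ‖G x‖^2 := by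
      rw [← hplan]
      exact setIntegral_le_integral hsq_int
        (Filter.Eventually.of_forall fun ξ => by positivity)
    calc ‖𝓕⁻ h x‖ ≤ ∫ ξ, ‖h ξ‖ := h1
      _ = ∫ ξ in s, ‖h ξ‖ := h2
      _ ≤ Real.sqrt (∫ ξ in s, ‖h ξ‖^2) * Real.sqrt ((volume s).toReal) := hH
      _ ≤ Real.sqrt (∫ x, ‖G x‖^2) * Real.sqrt ((volume s).toReal) := by
          gcongr
      _ = M := by rw [hMdef, mul_comm]
  have hGt_cont : Continuous (𝓕⁻ h) := by
    apply VectorFourier.fourierIntegral_continuous Real.continuous_fourierChar ?_ hh_int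
    exact continuous_inner.neg
  have hM0 : 0 ≤ M := mul_nonneg (Real.sqrt_nonneg _) (Real.sqrt_nonneg _)
  have key : ∫ x in ball x₀ ρ, ‖G x‖^2 ≤ (volume (ball x₀ ρ)).toReal * M^2 := by
    have e1 : ∫ x in ball x₀ ρ, ‖G x‖^2 = ∫ x in ball x₀ ρ, ‖𝓕⁻ h x‖^2 := by
      apply setIntegral_congr_ae measurableSet_ball
      filter_upwards [hae] with x hx _
      rw [hx]
    have hInt2 : IntegrableOn (fun x => ‖𝓕⁻ h x‖^2) (ball x₀ ρ) := by
      apply Measure.integrableOn_of_bounded (M := M^2) measure_ball_lt_top.ne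
        ((by fun_prop : Continuous fun x => ‖𝓕⁻ h x‖^2).aestronglyMeasurable)
      filter_upwards with x
      rw [Real.norm_of_nonneg (by positivity)]
      exact pow_le_pow_left₀ (norm_nonneg _) (hbound x) 2
    rw [e1]
    calc ∫ x in ball x₀ ρ, ‖𝓕⁻ h x‖^2 ≤ ∫ _x in ball x₀ ρ, M^2 := by
          apply setIntegral_mono_on hInt2
            (integrableOn_const measure_ball_lt_top.ne) measurableSet_ball
          intro x _
          exact pow_le_pow_left₀ (norm_nonneg _) (hbound x) 2
      _ = (volume (ball x₀ ρ)).toReal * M^2 := by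
          rw [setIntegral_const, smul_eq_mul]; rfl
  have hvρ : (volume (ball x₀ ρ)).toReal = ρ^n * c := by
    rw [Measure.addHaar_ball_of_pos volume x₀ hρ, ENNReal.toReal_mul,
      ENNReal.toReal_ofReal (by positivity), finrank_euclideanSpace_fin]
  have hvr : (volume s).toReal = r^n * c := by
    rw [hsdef, Measure.addHaar_ball_of_pos volume ξ₀ hr, ENNReal.toReal_mul,
      ENNReal.toReal_ofReal (by positivity), finrank_euclideanSpace_fin]
  have hM2 : M^2 = (volume s).toReal * ∫ x, ‖G x‖^2 := by
    rw [hMdef, mul_pow, Real.sq_sqrt ENNReal.toReal_nonneg, Real.sq_sqrt hGnn]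
  rw [hvρ, hM2, hvr] at key
  calc ∫ x in ball x₀ ρ, ‖G x‖^2 ≤ ρ^n * c * (r^n * c * ∫ x, ‖G x‖^2) := key
    _ = c^2 * (ρ * r)^n * ∫ x, ‖G x‖^2 := by rw [mul_pow]; ring
end

section
/- Let h : ℝ^{n-1} → ℝ be a C² function satisfying ‖∂²_{ξξ}h(ξ) − I_{n-1}‖_op ≤ ε₀ for all ξ, where ε₀ > 0 is sufficiently small (depending only on n). Let V ⊂ ℝⁿ be a linear subspace given by V = {x : Σ_{j=1}^n a_{i,j} x_j = 0, i = 1,…,n−m}, and suppose ξ̃ ∈ ℝ^{n-1} satisfies Σ_{j=1}^{n-1} a_{i,j} ∂_{ξ_j}h(ξ̃) = a_{i,n} for all i, with the vectors αᵢ' = (a_{i,1},…,a_{i,n-1}) linearly independent. Let V̄ ⊂ ℝ^{n-1} be identified with V ∩ {x_n = 0} and let W̃ = span⟨∂²_{ξξ}h(ξ̃)α₁', …, ∂²_{ξξ}h(ξ̃)α_{n-m}'⟩. Then for every nonzero v ∈ V̄ and every nonzero w ∈ W̃, the angle between v and w is bounded below by a positive constant depending only on n and ε₀. -/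
set_option maxHeartbeats 1000000 in
/-- quantitative transversality of `V̄` and
`W̃ = span⟨∂²h(ξ̃)αᵢ'⟩` when the Hessian of `h` is `ε₀`-close to the identity. -/
theorem stmt_3 (n m : ℕ) (hn : 2 ≤ n) (hm : 1 ≤ m) (hmn : m ≤ n - 1) :
    ∃ ε₀ > (0:ℝ), ∃ c > (0:ℝ),
      ∀ (h : EuclideanSpace ℝ (Fin (n-1)) → ℝ), ContDiff ℝ 2 h →
      (∀ (ξ u w : EuclideanSpace ℝ (Fin (n-1))),
        |fderiv ℝ (fderiv ℝ h) ξ u w - (inner ℝ u w : ℝ)| ≤ ε₀ * ‖u‖ * ‖w‖) →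
      ∀ (a : Fin (n - m) → EuclideanSpace ℝ (Fin (n-1))) (b : Fin (n - m) → ℝ)
        (ξt : EuclideanSpace ℝ (Fin (n-1))),
        LinearIndependent ℝ a →
        (∀ i, fderiv ℝ h ξt (a i) = b i) →
        ∀ v : EuclideanSpace ℝ (Fin (n-1)),
          (∀ i, (inner ℝ (a i) v : ℝ) = 0) → v ≠ 0 →
        ∀ w, w ∈ Submodule.span ℝ
            (Set.range fun i =>
              (InnerProductSpace.toDual ℝ (EuclideanSpace ℝ (Fin (n-1)))).symm
                (fderiv ℝ (fderiv ℝ h) ξt (a i))) →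
          w ≠ 0 → c ≤ InnerProductGeometry.angle v w := by
  refine ⟨1/4, by norm_num, Real.pi/3, by positivity, ?_⟩
  intro h hC2 hHess a b ξt hli hgrad v hv hv0 w hw hw0
  obtain ⟨c, hc⟩ := (Submodule.mem_span_range_iff_exists_fun ℝ).mp hw
  set D := fderiv ℝ (fderiv ℝ h) ξt with hD
  set u := ∑ i, c i • a i with hu
  -- key: ⟪w, x⟫ = D u x for all x
  have key : ∀ x, (inner ℝ w x : ℝ) = D u x := by
    intro x
    rw [← hc, sum_inner, hu, map_sum, ContinuousLinearMap.sum_apply]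
    refine Finset.sum_congr rfl fun i _ => ?_
    rw [real_inner_smul_left, map_smul, ContinuousLinearMap.smul_apply,
      InnerProductSpace.toDual_symm_apply, smul_eq_mul]
  -- ⟪u, v⟫ = 0
  have huv : (inner ℝ u v : ℝ) = 0 := by
    rw [hu, sum_inner]
    simp only [real_inner_smul_left, hv, mul_zero, Finset.sum_const_zero]
  -- |⟪w, v⟫| ≤ 1/4 ‖u‖ ‖v‖
  have hb1 : |(inner ℝ w v : ℝ)| ≤ 1/4 * ‖u‖ * ‖v‖ := by
    have h1 := hHess ξt u v
    rw [huv, sub_zero, ← hD] at h1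
    rwa [key v]
  -- u ≠ 0
  have hu0 : u ≠ 0 := by
    intro h0
    apply hw0
    have hz : (inner ℝ w w : ℝ) = 0 := by
      rw [key w, h0]; simp
    exact inner_self_eq_zero.mp hz
  have hunorm : (0:ℝ) < ‖u‖ := norm_pos_iff.mpr hu0
  -- 3/4 ‖u‖ ≤ ‖w‖
  have hb2 : 3/4 * ‖u‖ ≤ ‖w‖ := by
    have h1 : (3/4 : ℝ) * ‖u‖ * ‖u‖ ≤ (inner ℝ w u : ℝ) := by
      have h2 := hHess ξt u u
      rw [← hD, real_inner_self_eq_norm_mul_norm] at h2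
      have habs := abs_le.mp h2
      rw [key u]
      nlinarith [habs.1]
    have h2 : (inner ℝ w u : ℝ) ≤ ‖w‖ * ‖u‖ := real_inner_le_norm w u
    exact le_of_mul_le_mul_right (h1.trans h2) hunorm
  have hwnorm : (0:ℝ) < ‖w‖ := norm_pos_iff.mpr hw0
  have hvnorm : (0:ℝ) < ‖v‖ := norm_pos_iff.mpr hv0
  -- the cosine is at most 1/3 in absolute value
  have hcos : |(inner ℝ v w : ℝ) / (‖v‖ * ‖w‖)| ≤ 1/3 := by
    rw [abs_div, abs_of_pos (by positivity : (0:ℝ) < ‖v‖ * ‖w‖),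
      div_le_iff₀ (by positivity)]
    have hvw : |(inner ℝ v w : ℝ)| = |(inner ℝ w v : ℝ)| := by rw [real_inner_comm]
    rw [hvw]
    calc |(inner ℝ w v : ℝ)| ≤ 1/4 * ‖u‖ * ‖v‖ := hb1
      _ ≤ 1/3 * (‖v‖ * ‖w‖) := by nlinarith
  rw [InnerProductGeometry.angle]
  have habs := abs_le.mp hcos
  have hpi3 : Real.pi / 3 = Real.arccos (1/2) := by
    rw [show (1/2:ℝ) = Real.cos (Real.pi/3) by rw [Real.cos_pi_div_three]]
    rw [Real.arccos_cos (by positivity) (by linarith [Real.pi_pos])]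
  rw [hpi3, Real.arccos, Real.arccos]
  have hmono : Real.arcsin ((inner ℝ v w : ℝ) / (‖v‖ * ‖w‖)) ≤ Real.arcsin (1/2) :=
    Real.monotone_arcsin (by linarith [habs.2])
  linarith
end
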